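/- For every pair (ψ₁, ψ₂) ∈ S(ℝ², ℂ²), the square of the Dirac operator satisfies D(D(ψ₁, ψ₂)) = ((H − 1/2)ψ₁, (H + 1/2)ψ₂); that is, D² = H ⊗ Id₂ + (1/2)·diag(−1, 1) on S(ℝ², ℂ²). -/

import Mathlib

open MeasureTheory Complex
open scoped ENNReal

noncomputable section

/-- `p_x = −i·ħ₀·∂_x`. -/
def pxOp (hb : ℝ) (f : ℝ × ℝ → ℂ) : ℝ × ℝ → ℂ := fun p =>
  -Complex.I * hb * fderiv ℝ f p (1, 0)

/-- `p_y = −i·ħ₀·∂_y`. -/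
def pyOp (hb : ℝ) (f : ℝ × ℝ → ℂ) : ℝ × ℝ → ℂ := fun p =>
  -Complex.I * hb * fderiv ℝ f p (0, 1)

/-- `Π_x = ((1−r)ħ₀B₀/(ħ₀−rθ₀B₀))·y + (((r+s−rs)θ₀B₀−ħ₀)/(rθ₀B₀−ħ₀))·p_x`. -/
def PixOp (hb th B r s : ℝ) (f : ℝ × ℝ → ℂ) : ℝ × ℝ → ℂ := fun p =>
  ((1 - r) * hb * B / (hb - r * th * B)) * p.2 * f p +
    (((r + s - r * s) * th * B - hb) / (r * th * B - hb)) * pxOp hb f p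

/-- `Π_y = −rB₀·x + (1 + r(s−1)θ₀B₀/ħ₀)·p_y`. -/
def PiyOp (hb th B r s : ℝ) (f : ℝ × ℝ → ℂ) : ℝ × ℝ → ℂ := fun p =>
  -(r * B) * p.1 * f p + (1 + r * (s - 1) * th * B / hb) * pyOp hb f p

/-- `Π̃_x = Π_x / √(ħ₀B₀)`. -/
def PixT (hb th B r s : ℝ) (f : ℝ × ℝ → ℂ) : ℝ × ℝ → ℂ := fun p =>
  (Real.sqrt (hb * B))⁻¹ * PixOp hb th B r s f p

/-- `Π̃_y = Π_y / √(ħ₀B₀)`. -/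
def PiyT (hb th B r s : ℝ) (f : ℝ × ℝ → ℂ) : ℝ × ℝ → ℂ := fun p =>
  (Real.sqrt (hb * B))⁻¹ * PiyOp hb th B r s f p

/-- `H = ((Π̃_x)² + (Π̃_y)²)/2`. -/
def Hop (hb th B r s : ℝ) (f : ℝ × ℝ → ℂ) : ℝ × ℝ → ℂ := fun p =>
  (PixT hb th B r s (PixT hb th B r s f) p + PiyT hb th B r s (PiyT hb th B r s f) p) / 2

/-- The Dirac operator on pairs:
`D(ψ₁, ψ₂) = (1/√2)·((Π̃_x − iΠ̃_y)ψ₂, (Π̃_x + iΠ̃_y)ψ₁)`. -/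
def Dirac (hb th B r s : ℝ) (ψ : (ℝ × ℝ → ℂ) × (ℝ × ℝ → ℂ)) :
    (ℝ × ℝ → ℂ) × (ℝ × ℝ → ℂ) :=
  (fun p => (PixT hb th B r s ψ.2 p - Complex.I * PiyT hb th B r s ψ.2 p) / Real.sqrt 2,
   fun p => (PixT hb th B r s ψ.1 p + Complex.I * PiyT hb th B r s ψ.1 p) / Real.sqrt 2)

/-! ### Auxiliary machinery -/

/-- Normal form for first–order differential operators with linear coefficients. -/
def NF (a b c d : ℂ) (f : ℝ × ℝ → ℂ) : ℝ × ℝ → ℂ := fun q =>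
  a * ((q.1 : ℂ) * f q) + b * ((q.2 : ℂ) * f q) + c * fderiv ℝ f q (1, 0) +
    d * fderiv ℝ f q (0, 1)

lemma smooth_fderiv (f : ℝ × ℝ → ℂ) (hf : ContDiff ℝ (⊤ : ℕ∞) f) :
    ContDiff ℝ (⊤ : ℕ∞) (fderiv ℝ f) :=
  hf.fderiv_right (by simp)

lemma smooth_partial (f : ℝ × ℝ → ℂ) (hf : ContDiff ℝ (⊤ : ℕ∞) f) (w : ℝ × ℝ) :
    ContDiff ℝ (⊤ : ℕ∞) (fun p => fderiv ℝ f p w) :=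
  (hf.fderiv_right (by simp)).clm_apply contDiff_const

lemma smooth_coord1 : ContDiff ℝ (⊤ : ℕ∞) (fun q : ℝ × ℝ => (q.1 : ℂ)) :=
  (Complex.ofRealCLM.comp (ContinuousLinearMap.fst ℝ ℝ ℝ)).contDiff
lemma smooth_coord2 : ContDiff ℝ (⊤ : ℕ∞) (fun q : ℝ × ℝ => (q.2 : ℂ)) :=
  (Complex.ofRealCLM.comp (ContinuousLinearMap.snd ℝ ℝ ℝ)).contDiff

lemma smooth_NF (a b c d : ℂ) (f : ℝ × ℝ → ℂ) (hf : ContDiff ℝ (⊤ : ℕ∞) f) :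
    ContDiff ℝ (⊤ : ℕ∞) (NF a b c d f) := by
  unfold NF
  exact (((contDiff_const.mul (smooth_coord1.mul hf)).add
    (contDiff_const.mul (smooth_coord2.mul hf))).add
    (contDiff_const.mul (smooth_partial f hf (1, 0)))).add
    (contDiff_const.mul (smooth_partial f hf (0, 1)))

lemma fderiv_partial (f : ℝ × ℝ → ℂ) (hf : ContDiff ℝ (⊤ : ℕ∞) f) (w p v : ℝ × ℝ) :
    fderiv ℝ (fun q => fderiv ℝ f q w) p v = fderiv ℝ (fderiv ℝ f) p v w := by
  have hc : DifferentiableAt ℝ (fderiv ℝ f) p :=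
    ((smooth_fderiv f hf).differentiable (by simp)) p
  rw [fderiv_clm_apply hc (differentiableAt_const w)]
  simp

lemma symm_partial (f : ℝ × ℝ → ℂ) (hf : ContDiff ℝ (⊤ : ℕ∞) f) (p v w : ℝ × ℝ) :
    fderiv ℝ (fderiv ℝ f) p v w = fderiv ℝ (fderiv ℝ f) p w v :=
  (hf.contDiffAt.isSymmSndFDerivAt (by
    have : ((2:ℕ∞) : WithTop ℕ∞) ≤ ((⊤:ℕ∞) : WithTop ℕ∞) := WithTop.coe_le_coe.mpr le_top
    simpa using this)) v w

lemma fderiv_coord1_mul (f : ℝ × ℝ → ℂ) (p : ℝ × ℝ) (hf : DifferentiableAt ℝ f p) (v : ℝ × ℝ) :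
    fderiv ℝ (fun q : ℝ × ℝ => (q.1 : ℂ) * f q) p v
      = (v.1 : ℂ) * f p + (p.1 : ℂ) * fderiv ℝ f p v := by
  have h1 : HasFDerivAt (fun q : ℝ × ℝ => (q.1 : ℂ))
      (Complex.ofRealCLM.comp (ContinuousLinearMap.fst ℝ ℝ ℝ)) p :=
    (Complex.ofRealCLM.comp (ContinuousLinearMap.fst ℝ ℝ ℝ)).hasFDerivAt
  rw [show (fun q : ℝ × ℝ => (q.1 : ℂ) * f q) = (fun q : ℝ × ℝ => (q.1 : ℂ)) * f from rfl,
    (h1.mul hf.hasFDerivAt).fderiv]; simp; ring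

lemma fderiv_coord2_mul (f : ℝ × ℝ → ℂ) (p : ℝ × ℝ) (hf : DifferentiableAt ℝ f p) (v : ℝ × ℝ) :
    fderiv ℝ (fun q : ℝ × ℝ => (q.2 : ℂ) * f q) p v
      = (v.2 : ℂ) * f p + (p.2 : ℂ) * fderiv ℝ f p v := by
  have h1 : HasFDerivAt (fun q : ℝ × ℝ => (q.2 : ℂ))
      (Complex.ofRealCLM.comp (ContinuousLinearMap.snd ℝ ℝ ℝ)) p :=
    (Complex.ofRealCLM.comp (ContinuousLinearMap.snd ℝ ℝ ℝ)).hasFDerivAt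
  rw [show (fun q : ℝ × ℝ => (q.2 : ℂ) * f q) = (fun q : ℝ × ℝ => (q.2 : ℂ)) * f from rfl,
    (h1.mul hf.hasFDerivAt).fderiv]; simp; ring

lemma fderiv_NF (a b c d : ℂ) (f : ℝ × ℝ → ℂ) (hf : ContDiff ℝ (⊤ : ℕ∞) f) (p v : ℝ × ℝ) :
    fderiv ℝ (NF a b c d f) p v =
      a * ((v.1 : ℂ) * f p + (p.1 : ℂ) * fderiv ℝ f p v) +
      b * ((v.2 : ℂ) * f p + (p.2 : ℂ) * fderiv ℝ f p v) +
      c * fderiv ℝ (fderiv ℝ f) p v (1, 0) +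
      d * fderiv ℝ (fderiv ℝ f) p v (0, 1) := by
  have hdf : DifferentiableAt ℝ f p := (hf.differentiable (by simp)) p
  have h1 : DifferentiableAt ℝ (fun q : ℝ × ℝ => (q.1 : ℂ) * f q) p :=
    ((smooth_coord1.differentiable (by simp)) p).mul hdf
  have h2 : DifferentiableAt ℝ (fun q : ℝ × ℝ => (q.2 : ℂ) * f q) p :=
    ((smooth_coord2.differentiable (by simp)) p).mul hdf
  have h3 : DifferentiableAt ℝ (fun q => fderiv ℝ f q ((1 : ℝ), (0 : ℝ))) p :=
    ((smooth_partial f hf (1, 0)).differentiable (by simp)) p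
  have h4 : DifferentiableAt ℝ (fun q => fderiv ℝ f q ((0 : ℝ), (1 : ℝ))) p :=
    ((smooth_partial f hf (0, 1)).differentiable (by simp)) p
  unfold NF
  rw [fderiv_fun_add (((h1.const_mul a).fun_add (h2.const_mul b)).fun_add (h3.const_mul c))
      (h4.const_mul d),
    fderiv_fun_add ((h1.const_mul a).fun_add (h2.const_mul b)) (h3.const_mul c),
    fderiv_fun_add (h1.const_mul a) (h2.const_mul b),
    fderiv_const_mul h1 a, fderiv_const_mul h2 b, fderiv_const_mul h3 c, fderiv_const_mul h4 d]
  simp only [ContinuousLinearMap.add_apply, ContinuousLinearMap.coe_smul', Pi.smul_apply,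
    smul_eq_mul]
  rw [fderiv_coord1_mul f p hdf v, fderiv_coord2_mul f p hdf v,
    fderiv_partial f hf (1, 0) p v, fderiv_partial f hf (0, 1) p v]

lemma PixOp_eq_NF (hb th B r s : ℝ) (f : ℝ × ℝ → ℂ) :
    PixOp hb th B r s f =
      NF 0 (((1 - r) * hb * B / (hb - r * th * B) : ℝ) : ℂ)
        (((((r + s - r * s) * th * B - hb) / (r * th * B - hb) : ℝ) : ℂ) * (-Complex.I * hb)) 0
        f := by
  funext p; simp only [PixOp, pxOp, NF]; push_cast; ring

lemma PiyOp_eq_NF (hb th B r s : ℝ) (f : ℝ × ℝ → ℂ) :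
    PiyOp hb th B r s f =
      NF ((-(r * B) : ℝ) : ℂ) 0 0
        (((1 + r * (s - 1) * th * B / hb : ℝ) : ℂ) * (-Complex.I * hb)) f := by
  funext p; simp only [PiyOp, pyOp, NF]; push_cast; ring

lemma smooth_PixOp (hb th B r s : ℝ) (f : ℝ × ℝ → ℂ) (hf : ContDiff ℝ (⊤ : ℕ∞) f) :
    ContDiff ℝ (⊤ : ℕ∞) (PixOp hb th B r s f) := by
  rw [PixOp_eq_NF]; exact smooth_NF _ _ _ _ f hf

lemma smooth_PiyOp (hb th B r s : ℝ) (f : ℝ × ℝ → ℂ) (hf : ContDiff ℝ (⊤ : ℕ∞) f) :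
    ContDiff ℝ (⊤ : ℕ∞) (PiyOp hb th B r s f) := by
  rw [PiyOp_eq_NF]; exact smooth_NF _ _ _ _ f hf

lemma smooth_PixT (hb th B r s : ℝ) (f : ℝ × ℝ → ℂ) (hf : ContDiff ℝ (⊤ : ℕ∞) f) :
    ContDiff ℝ (⊤ : ℕ∞) (PixT hb th B r s f) := by
  unfold PixT; exact contDiff_const.mul (smooth_PixOp hb th B r s f hf)

lemma smooth_PiyT (hb th B r s : ℝ) (f : ℝ × ℝ → ℂ) (hf : ContDiff ℝ (⊤ : ℕ∞) f) :
    ContDiff ℝ (⊤ : ℕ∞) (PiyT hb th B r s f) := by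
  unfold PiyT; exact contDiff_const.mul (smooth_PiyOp hb th B r s f hf)

lemma commOp (hb th B r s : ℝ) (hhb : hb ≠ 0) (hrs : r * th * B ≠ hb)
    (f : ℝ × ℝ → ℂ) (hf : ContDiff ℝ (⊤ : ℕ∞) f) (p : ℝ × ℝ) :
    PixOp hb th B r s (PiyOp hb th B r s f) p - PiyOp hb th B r s (PixOp hb th B r s f) p
      = Complex.I * hb * B * f p := by
  have h1 : (hb : ℂ) - r * th * B ≠ 0 := by
    intro h; apply hrs; have := sub_eq_zero.mp h
    exact_mod_cast this.symm
  have h2 : (r : ℂ) * th * B - hb ≠ 0 := by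
    intro h; apply hrs; have := sub_eq_zero.mp h
    exact_mod_cast this
  have h3 : (hb : ℂ) ≠ 0 := by exact_mod_cast hhb
  conv_lhs => rw [PiyOp_eq_NF hb th B r s f, PixOp_eq_NF hb th B r s f]
  simp only [PixOp, pxOp, PiyOp, pyOp]
  rw [fderiv_NF _ _ _ _ f hf, fderiv_NF _ _ _ _ f hf,
    symm_partial f hf p (0, 1) (1, 0)]
  have hcoef : ((1:ℂ) - r) * hb * B / (hb - r * th * B) * (1 + r * (s - 1) * th * B / hb)
      - (-(r * B)) * (((r + s - r * s) * th * B - hb) / (r * th * B - hb)) = (B : ℂ) := by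
    have e : ((r : ℂ) * th * B - hb) = -(hb - r * th * B) := by ring
    rw [e, div_neg]
    field_simp
    linear_combination (B : ℂ) * mul_inv_cancel₀ (show (-(B * r * th) + hb : ℂ) ≠ 0 by
      contrapose! h1; linear_combination h1)
  simp only [NF]
  push_cast
  linear_combination (Complex.I * hb * f p) * hcoef

/-- Linearity of `PixOp` on combinations `u•g + v•h`. -/
lemma PixOp_lin (hb th B r s : ℝ) (g h : ℝ × ℝ → ℂ) (hg : Differentiable ℝ g)
    (hh : Differentiable ℝ h) (u v : ℂ) (p : ℝ × ℝ) :
    PixOp hb th B r s (fun q => u * g q + v * h q) p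
      = u * PixOp hb th B r s g p + v * PixOp hb th B r s h p := by
  simp only [PixOp, pxOp]
  rw [fderiv_fun_add ((hg p).const_mul u) ((hh p).const_mul v),
    fderiv_const_mul (hg p) u, fderiv_const_mul (hh p) v]
  simp only [ContinuousLinearMap.add_apply, ContinuousLinearMap.coe_smul', Pi.smul_apply,
    smul_eq_mul]
  ring

lemma PiyOp_lin (hb th B r s : ℝ) (g h : ℝ × ℝ → ℂ) (hg : Differentiable ℝ g)
    (hh : Differentiable ℝ h) (u v : ℂ) (p : ℝ × ℝ) :
    PiyOp hb th B r s (fun q => u * g q + v * h q) p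
      = u * PiyOp hb th B r s g p + v * PiyOp hb th B r s h p := by
  simp only [PiyOp, pyOp]
  rw [fderiv_fun_add ((hg p).const_mul u) ((hh p).const_mul v),
    fderiv_const_mul (hg p) u, fderiv_const_mul (hh p) v]
  simp only [ContinuousLinearMap.add_apply, ContinuousLinearMap.coe_smul', Pi.smul_apply,
    smul_eq_mul]
  ring

lemma PixT_lin (hb th B r s : ℝ) (g h : ℝ × ℝ → ℂ) (hg : Differentiable ℝ g)
    (hh : Differentiable ℝ h) (u v : ℂ) (p : ℝ × ℝ) :
    PixT hb th B r s (fun q => u * g q + v * h q) p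
      = u * PixT hb th B r s g p + v * PixT hb th B r s h p := by
  simp only [PixT]
  rw [PixOp_lin hb th B r s g h hg hh u v p]
  ring

lemma PiyT_lin (hb th B r s : ℝ) (g h : ℝ × ℝ → ℂ) (hg : Differentiable ℝ g)
    (hh : Differentiable ℝ h) (u v : ℂ) (p : ℝ × ℝ) :
    PiyT hb th B r s (fun q => u * g q + v * h q) p
      = u * PiyT hb th B r s g p + v * PiyT hb th B r s h p := by
  simp only [PiyT]
  rw [PiyOp_lin hb th B r s g h hg hh u v p]
  ring

lemma PixOp_const_mul (hb th B r s : ℝ) (g : ℝ × ℝ → ℂ) (hg : Differentiable ℝ g)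
    (c : ℂ) (p : ℝ × ℝ) :
    PixOp hb th B r s (fun q => c * g q) p = c * PixOp hb th B r s g p := by
  simp only [PixOp, pxOp]
  rw [fderiv_const_mul (hg p) c]
  simp only [ContinuousLinearMap.coe_smul', Pi.smul_apply, smul_eq_mul]
  ring

lemma PiyOp_const_mul (hb th B r s : ℝ) (g : ℝ × ℝ → ℂ) (hg : Differentiable ℝ g)
    (c : ℂ) (p : ℝ × ℝ) :
    PiyOp hb th B r s (fun q => c * g q) p = c * PiyOp hb th B r s g p := by
  simp only [PiyOp, pyOp]
  rw [fderiv_const_mul (hg p) c]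
  simp only [ContinuousLinearMap.coe_smul', Pi.smul_apply, smul_eq_mul]
  ring

/-- Commutator at the level of the rescaled operators: `[Π̃x, Π̃y] = i`. -/
lemma commT (hb th B r s : ℝ) (hhb : hb ≠ 0) (hB : B ≠ 0) (hrs : r * th * B ≠ hb)
    (hpos : 0 < hb * B) (f : ℝ × ℝ → ℂ) (hf : ContDiff ℝ (⊤ : ℕ∞) f) (p : ℝ × ℝ) :
    PixT hb th B r s (PiyT hb th B r s f) p - PiyT hb th B r s (PixT hb th B r s f) p
      = Complex.I * f p := by
  have hdx : Differentiable ℝ (PixOp hb th B r s f) :=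
    (smooth_PixOp hb th B r s f hf).differentiable (by simp)
  have hdy : Differentiable ℝ (PiyOp hb th B r s f) :=
    (smooth_PiyOp hb th B r s f hf).differentiable (by simp)
  have hsq : ((Real.sqrt (hb * B) : ℝ) : ℂ) * ((Real.sqrt (hb * B) : ℝ) : ℂ) = (hb : ℂ) * B := by
    rw [← Complex.ofReal_mul, Real.mul_self_sqrt hpos.le]
    push_cast; ring
  have hsne : ((Real.sqrt (hb * B) : ℝ) : ℂ) ≠ 0 :=
    Complex.ofReal_ne_zero.mpr (Real.sqrt_ne_zero'.mpr hpos)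
  have hc := commOp hb th B r s hhb hrs f hf p
  have hyfun : PiyT hb th B r s f
      = fun q => (((Real.sqrt (hb * B))⁻¹ : ℝ) : ℂ) * PiyOp hb th B r s f q := rfl
  have hxfun : PixT hb th B r s f
      = fun q => (((Real.sqrt (hb * B))⁻¹ : ℝ) : ℂ) * PixOp hb th B r s f q := rfl
  simp only [PixT, PiyT]
  rw [hyfun, hxfun]
  rw [PixOp_const_mul hb th B r s (PiyOp hb th B r s f) hdy _ p,
    PiyOp_const_mul hb th B r s (PixOp hb th B r s f) hdx _ p]
  push_cast
  field_simp
  linear_combination hc - Complex.I * f p * hsq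

theorem stmt14 (hb th B r s : ℝ) (hhb : hb ≠ 0) (hth : th ≠ 0) (hB : B ≠ 0)
    (hnd : hb - th * B ≠ 0) (hrs : r * th * B ≠ hb) (hpos : 0 < hb * B) :
    ∀ ψ₁ ψ₂ : SchwartzMap (ℝ × ℝ) ℂ,
      Dirac hb th B r s (Dirac hb th B r s (⇑ψ₁, ⇑ψ₂)) =
        (fun p => Hop hb th B r s ⇑ψ₁ p - (1 / 2) * ψ₁ p,
         fun p => Hop hb th B r s ⇑ψ₂ p + (1 / 2) * ψ₂ p) := by
  intro ψ₁ ψ₂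
  have h2 : ((Real.sqrt 2 : ℝ) : ℂ) * ((Real.sqrt 2 : ℝ) : ℂ) = 2 := by
    rw [← Complex.ofReal_mul, Real.mul_self_sqrt (by norm_num : (0:ℝ) ≤ 2)]
    norm_num
  have h2ne : ((Real.sqrt 2 : ℝ) : ℂ) ≠ 0 :=
    Complex.ofReal_ne_zero.mpr (Real.sqrt_ne_zero'.mpr (by norm_num))
  have key : ∀ ψ : SchwartzMap (ℝ × ℝ) ℂ, ∀ ε : ℂ, ε = 1 ∨ ε = -1 →
      (fun p => (PixT hb th B r s
          (fun q => (PixT hb th B r s ⇑ψ q + ε * (Complex.I * PiyT hb th B r s ⇑ψ q))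
              / (Real.sqrt 2 : ℝ)) p
        - ε * (Complex.I * PiyT hb th B r s
          (fun q => (PixT hb th B r s ⇑ψ q + ε * (Complex.I * PiyT hb th B r s ⇑ψ q))
              / (Real.sqrt 2 : ℝ)) p)) / (Real.sqrt 2 : ℝ))
      = fun p => Hop hb th B r s ⇑ψ p - ε * ((1 / 2) * ψ p) := by
    intro ψ ε hε
    have hψ : ContDiff ℝ (⊤ : ℕ∞) ⇑ψ := ψ.smooth ⊤
    have hdx : Differentiable ℝ (PixT hb th B r s ⇑ψ) :=
      (smooth_PixT hb th B r s ⇑ψ hψ).differentiable (by simp)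
    have hdy : Differentiable ℝ (PiyT hb th B r s ⇑ψ) :=
      (smooth_PiyT hb th B r s ⇑ψ hψ).differentiable (by simp)
    have hinner : (fun q => (PixT hb th B r s ⇑ψ q + ε * (Complex.I * PiyT hb th B r s ⇑ψ q))
            / (Real.sqrt 2 : ℝ))
        = fun q => (((Real.sqrt 2 : ℝ) : ℂ))⁻¹ * PixT hb th B r s ⇑ψ q
            + ((((Real.sqrt 2 : ℝ) : ℂ))⁻¹ * (ε * Complex.I)) * PiyT hb th B r s ⇑ψ q := by
      funext q; ring
    funext p
    rw [hinner, PixT_lin hb th B r s _ _ hdx hdy _ _ p,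
      PiyT_lin hb th B r s _ _ hdx hdy _ _ p]
    have hcm := commT hb th B r s hhb hB hrs hpos ⇑ψ hψ p
    simp only [Hop]
    rcases hε with hε | hε
    · subst hε
      field_simp
      linear_combination (-(PixT hb th B r s (PixT hb th B r s ⇑ψ) p)
          - PiyT hb th B r s (PiyT hb th B r s ⇑ψ) p - ψ p) * h2
        + (-2 * PiyT hb th B r s (PiyT hb th B r s ⇑ψ) p - 2 * ψ p) * Complex.I_sq
        + (2 * Complex.I) * hcm + (4 * ψ p) * Complex.I_sq + (2 * ψ p) * h2
    · subst hε
      field_simp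
      linear_combination (-(PixT hb th B r s (PixT hb th B r s ⇑ψ) p)
          - PiyT hb th B r s (PiyT hb th B r s ⇑ψ) p - ψ p) * h2
        + (-2 * PiyT hb th B r s (PiyT hb th B r s ⇑ψ) p - 2 * ψ p) * Complex.I_sq
        + (-2 * Complex.I) * hcm
  have k1 := key ψ₁ 1 (Or.inl rfl)
  have k2 := key ψ₂ (-1) (Or.inr rfl)
  simp only [one_mul, neg_one_mul, neg_mul] at k1 k2
  simp only [← sub_eq_add_neg, sub_neg_eq_add] at k2
  unfold Dirac
  exact Prod.ext k1 k2
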